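/- Let f ∈ L²(ℝ) with ‖f‖₂ = 1, let ρ = |f⟩⟨f| be the corresponding pure state, and let T = max_{(x,ω)∈ℝ²} |Vf(x,ω)|². Then: (i) D[ρ] = 2√(1 − T); (ii) the quantity D[f] := inf{ ‖f − c φ_{(x₀,ω₀)}‖₂ : (x₀,ω₀) ∈ ℝ², c ∈ ℂ, |c| = 1 } satisfies D[f] = √(2(1 − √T)); and (iii) consequently (1/2) D[ρ] ≤ D[f] ≤ (1/√2) D[ρ]. -/

import Mathlib

open MeasureTheory Complex

noncomputable section

/-- The coherent state `φ_{(x₀,ω₀)}(x) = e^{2πiω₀x} 2^{1/4} e^{-π(x-x₀)²}` as a plain function. -/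
def coherentFun (z : ℝ × ℝ) : ℝ → ℂ := fun x =>
  Complex.exp (((2 * Real.pi * z.2 * x : ℝ) : ℂ) * Complex.I) *
    (((2 : ℝ) ^ ((1 : ℝ) / 4) * Real.exp (-Real.pi * (x - z.1) ^ 2) : ℝ) : ℂ)

lemma coherentFun_continuous (z : ℝ × ℝ) : Continuous (coherentFun z) := by
  unfold coherentFun; fun_prop

lemma coherentFun_memℒp (z : ℝ × ℝ) : MemLp (coherentFun z) 2 (volume : Measure ℝ) := by
  rw [memLp_two_iff_integrable_sq_norm (coherentFun_continuous z).aestronglyMeasurable]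
  have heq : (fun x => ‖coherentFun z x‖ ^ 2) =
      fun x => Real.sqrt 2 * Real.exp (-(2 * Real.pi) * (x - z.1) ^ 2) := by
    funext x
    have h1 : ‖coherentFun z x‖ =
        (2 : ℝ) ^ ((1 : ℝ) / 4) * Real.exp (-Real.pi * (x - z.1) ^ 2) := by
      unfold coherentFun
      rw [norm_mul, Complex.norm_exp_ofReal_mul_I, one_mul,
        Complex.norm_real, Real.norm_eq_abs, _root_.abs_of_nonneg (by positivity)]
    rw [h1, mul_pow, ← Real.exp_nat_mul,
      ← Real.rpow_natCast ((2:ℝ) ^ ((1:ℝ)/4)) 2, ← Real.rpow_mul (by norm_num),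
      Real.sqrt_eq_rpow]
    norm_num
    ring_nf
  rw [heq]
  exact ((integrable_exp_neg_mul_sq (by positivity)).comp_sub_right z.1).const_mul _

/-- The Hilbert space `L²(ℝ)`. -/
abbrev HS : Type := Lp ℂ 2 (volume : Measure ℝ)

/-- The coherent state `φ_{(x₀,ω₀)}` as an element of `L²(ℝ)`. -/
def coherent (z : ℝ × ℝ) : HS := (coherentFun_memℒp z).toLp (coherentFun z)

/-- The rank-one operator `|f⟩⟨f| : g ↦ ⟨f,g⟩ f`. -/
def rankOne {E : Type*} [NormedAddCommGroup E] [InnerProductSpace ℂ E] (f : E) : E →L[ℂ] E :=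
  (innerSL ℂ f).smulRight f

/-- The trace norm (sum of singular values) of an operator, characterized as the supremum
over finite orthonormal families `(e_i)`, `(g_i)` of `∑ i |⟨e_i, A g_i⟩|`. -/
def traceNorm {E : Type*} [NormedAddCommGroup E] [InnerProductSpace ℂ E]
    (A : E →L[ℂ] E) : ℝ :=
  ⨆ p : {p : Σ n : ℕ, (Fin n → E) × (Fin n → E) // Orthonormal ℂ p.2.1 ∧ Orthonormal ℂ p.2.2},
    ∑ i, ‖(inner ℂ (p.1.2.1 i) (A (p.1.2.2 i)) : ℂ)‖

/-- The Husimi function `u_ρ(x,ω) = ⟨φ_{(x,ω)}, ρ φ_{(x,ω)}⟩` of an operator on `L²(ℝ)`. -/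
def husimi (ρ : HS →L[ℂ] HS) (z : ℝ × ℝ) : ℝ := (inner ℂ (coherent z) (ρ (coherent z)) : ℂ).re

/-- `ρ` is a density matrix: a positive (trace-class) operator with `Tr ρ = 1`. -/
def IsDensityMatrix (ρ : HS →L[ℂ] HS) : Prop :=
  ρ.IsPositive ∧ ∀ e : HilbertBasis ℕ ℂ HS, ∑' n, ((inner ℂ (e n) (ρ (e n)) : ℂ)).re = 1

/-- `D[ρ]`: the infimum of trace-norm distances of `ρ` to coherent-state projections. -/
def Ddist (ρ : HS →L[ℂ] HS) : ℝ := ⨅ z : ℝ × ℝ, traceNorm (ρ - rankOne (coherent z))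

/-- `D[f]`: the `L²`-distance of `f` to the coherent states multiplied by unimodular
constants. -/
def Dpure (f : HS) : ℝ :=
  ⨅ p : (ℝ × ℝ) × {c : ℂ // ‖c‖ = 1}, ‖f - (p.2 : ℂ) • coherent p.1‖


/-! ### Auxiliary lemmas -/

lemma normSq_coherentFun (z : ℝ × ℝ) (x : ℝ) : ‖coherentFun z x‖ ^ 2 =
    Real.sqrt 2 * Real.exp (-(2 * Real.pi) * (x - z.1) ^ 2) := by
  have h1 : ‖coherentFun z x‖ =
      (2 : ℝ) ^ ((1 : ℝ) / 4) * Real.exp (-Real.pi * (x - z.1) ^ 2) := by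
    unfold coherentFun
    rw [norm_mul, Complex.norm_exp_ofReal_mul_I, one_mul,
      Complex.norm_real, Real.norm_eq_abs, _root_.abs_of_nonneg (by positivity)]
  rw [h1, mul_pow, ← Real.exp_nat_mul,
    ← Real.rpow_natCast ((2:ℝ) ^ ((1:ℝ)/4)) 2, ← Real.rpow_mul (by norm_num),
    Real.sqrt_eq_rpow]
  norm_num
  ring_nf

lemma integral_coherentFun_sq (z : ℝ × ℝ) :
    ∫ x : ℝ, ‖coherentFun z x‖ ^ 2 = 1 := by
  have : ∫ x : ℝ, ‖coherentFun z x‖ ^ 2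
      = ∫ x : ℝ, Real.sqrt 2 * Real.exp (-(2 * Real.pi) * (x - z.1) ^ 2) := by
    simp_rw [normSq_coherentFun]
  rw [this, integral_const_mul]
  have hshift : ∫ x : ℝ, Real.exp (-(2 * Real.pi) * (x - z.1) ^ 2)
      = ∫ x : ℝ, Real.exp (-(2 * Real.pi) * x ^ 2) :=
    integral_sub_right_eq_self (fun x => Real.exp (-(2 * Real.pi) * x ^ 2)) z.1
  rw [hshift, integral_gaussian]
  rw [show Real.pi / (2 * Real.pi) = 1 / 2 by field_simp]
  rw [← Real.sqrt_mul (by norm_num)]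
  norm_num

lemma norm_coherent (z : ℝ × ℝ) : ‖coherent z‖ = 1 := by
  have hinner : (inner ℂ (coherent z) (coherent z) : ℂ) = 1 := by
    rw [MeasureTheory.L2.inner_def]
    have hae : (coherent z : ℝ → ℂ) =ᵐ[volume] coherentFun z := (coherentFun_memℒp z).coeFn_toLp
    calc (∫ x, (inner ℂ ((coherent z : ℝ → ℂ) x) ((coherent z : ℝ → ℂ) x) : ℂ))
        = ∫ x, (inner ℂ (coherentFun z x) (coherentFun z x) : ℂ) := by
          refine integral_congr_ae ?_
          filter_upwards [hae] with x hx; rw [hx]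
      _ = ∫ x, ((‖coherentFun z x‖^2 : ℝ) : ℂ) := by
          congr 1; funext x
          rw [RCLike.inner_apply, Complex.mul_conj']; push_cast; ring
      _ = ((∫ x, ‖coherentFun z x‖^2 : ℝ) : ℂ) := by
          exact (integral_ofReal (f := fun x => ‖coherentFun z x‖^2) (𝕜 := ℂ) (μ := volume))
      _ = 1 := by rw [integral_coherentFun_sq]; norm_num
  have h3 : ‖coherent z‖^2 = 1 := by
    rw [← @inner_self_eq_norm_sq ℂ, hinner]; simp
  nlinarith [norm_nonneg (coherent z)]

section TraceNormLemmas
variable {E : Type*} [NormedAddCommGroup E] [InnerProductSpace ℂ E]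

lemma rankOne_apply (f x : E) : rankOne f x = (inner ℂ f x : ℂ) • f := rfl

lemma orthonormal_elim0 : Orthonormal ℂ (fun _ : Fin 0 => (0 : E)) := by
  constructor
  · exact fun i => i.elim0
  · intro i; exact i.elim0

instance tnNonempty :
    Nonempty {p : Σ n : ℕ, (Fin n → E) × (Fin n → E) //
      Orthonormal ℂ p.2.1 ∧ Orthonormal ℂ p.2.2} :=
  ⟨⟨⟨0, fun _ => 0, fun _ => 0⟩, orthonormal_elim0, orthonormal_elim0⟩⟩

lemma traceNorm_zero : traceNorm (0 : E →L[ℂ] E) = 0 := by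
  have : ∀ p : {p : Σ n : ℕ, (Fin n → E) × (Fin n → E) //
      Orthonormal ℂ p.2.1 ∧ Orthonormal ℂ p.2.2},
      ∑ i, ‖(inner ℂ (p.1.2.1 i) ((0 : E →L[ℂ] E) (p.1.2.2 i)) : ℂ)‖ = 0 := by
    intro p; simp
  unfold traceNorm
  simp only [this]
  exact ciSup_const

lemma spectral_traceNorm {u v : E} (hu : ‖u‖ = 1) (hv : ‖v‖ = 1)
    (huv : (inner ℂ u v : ℂ) = 0) {s : ℝ} (hs : 0 ≤ s) :
    traceNorm ((s:ℂ) • rankOne u - (s:ℂ) • rankOne v) = 2 * s := by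
  set A : E →L[ℂ] E := (s:ℂ) • rankOne u - (s:ℂ) • rankOne v with hA
  have hvu : (inner ℂ v u : ℂ) = 0 := by rw [← inner_conj_symm, huv, map_zero]
  have hAapply : ∀ x : E, A x = ((s:ℂ) * inner ℂ u x) • u - ((s:ℂ) * inner ℂ v x) • v := by
    intro x
    simp only [hA, ContinuousLinearMap.sub_apply, ContinuousLinearMap.smul_apply,
      rankOne_apply, smul_smul]
  -- upper bound for each orthonormal pair
  have hub : ∀ p : {p : Σ n : ℕ, (Fin n → E) × (Fin n → E) //
      Orthonormal ℂ p.2.1 ∧ Orthonormal ℂ p.2.2},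
      ∑ i, ‖(inner ℂ (p.1.2.1 i) (A (p.1.2.2 i)) : ℂ)‖ ≤ 2 * s := by
    rintro ⟨⟨n, e, h⟩, he, hh⟩
    have hterm : ∀ i : Fin n, ‖(inner ℂ (e i) (A (h i)) : ℂ)‖ ≤
        s * (‖(inner ℂ (e i) u : ℂ)‖ * ‖(inner ℂ u (h i) : ℂ)‖) +
        s * (‖(inner ℂ (e i) v : ℂ)‖ * ‖(inner ℂ v (h i) : ℂ)‖) := by
      intro i
      rw [hAapply]
      rw [inner_sub_right, inner_smul_right, inner_smul_right]
      refine (norm_sub_le _ _).trans ?_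
      simp only [norm_smul, norm_mul]
      rw [Complex.norm_real, Real.norm_eq_abs, _root_.abs_of_nonneg hs]
      apply le_of_eq; ring
    calc ∑ i, ‖(inner ℂ (e i) (A (h i)) : ℂ)‖
        ≤ ∑ i, (s * (‖(inner ℂ (e i) u : ℂ)‖ * ‖(inner ℂ u (h i) : ℂ)‖) +
            s * (‖(inner ℂ (e i) v : ℂ)‖ * ‖(inner ℂ v (h i) : ℂ)‖)) :=
          Finset.sum_le_sum fun i _ => hterm i
      _ = s * (∑ i, ‖(inner ℂ (e i) u : ℂ)‖ * ‖(inner ℂ u (h i) : ℂ)‖) +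
            s * (∑ i, ‖(inner ℂ (e i) v : ℂ)‖ * ‖(inner ℂ v (h i) : ℂ)‖) := by
          rw [Finset.sum_add_distrib, Finset.mul_sum, Finset.mul_sum]
      _ ≤ s * 1 + s * 1 := by
          have key : ∀ w : E, ‖w‖ = 1 →
              (∑ i, ‖(inner ℂ (e i) w : ℂ)‖ * ‖(inner ℂ w (h i) : ℂ)‖) ≤ 1 := by
            intro w hw
            have hcs := Finset.sum_mul_sq_le_sq_mul_sq Finset.univ
              (fun i => ‖(inner ℂ (e i) w : ℂ)‖) (fun i => ‖(inner ℂ w (h i) : ℂ)‖)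
            have hb1 : (∑ i, ‖(inner ℂ (e i) w : ℂ)‖ ^ 2) ≤ 1 := by
              have := he.sum_inner_products_le (s := Finset.univ) w
              simpa [hw, norm_inner_symm] using this
            have hb2 : (∑ i, ‖(inner ℂ (w) (h i) : ℂ)‖ ^ 2) ≤ 1 := by
              have := hh.sum_inner_products_le (s := Finset.univ) w
              have h2 : ∀ i : Fin n, ‖(inner ℂ w (h i) : ℂ)‖ = ‖(inner ℂ (h i) w : ℂ)‖ :=
                fun i => norm_inner_symm w (h i)
              simp only [h2]
              simpa [hw] using this
            have hX0 : (0:ℝ) ≤ ∑ i, ‖(inner ℂ (e i) w : ℂ)‖ * ‖(inner ℂ w (h i) : ℂ)‖ :=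
              Finset.sum_nonneg (fun i _ =>
                mul_nonneg (norm_nonneg _) (norm_nonneg _))
            have ha0 : (0:ℝ) ≤ ∑ i, ‖(inner ℂ (e i) w : ℂ)‖ ^ 2 :=
              Finset.sum_nonneg (fun i _ => sq_nonneg _)
            have hb0 : (0:ℝ) ≤ ∑ i, ‖(inner ℂ w (h i) : ℂ)‖ ^ 2 :=
              Finset.sum_nonneg (fun i _ => sq_nonneg _)
            nlinarith [hcs, hb1, hb2, ha0, hb0, hX0]
          gcongr <;> [exact key u hu; exact key v hv]
      _ = 2 * s := by ring
  have hbdd : BddAbove (Set.range fun p : {p : Σ n : ℕ, (Fin n → E) × (Fin n → E) //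
      Orthonormal ℂ p.2.1 ∧ Orthonormal ℂ p.2.2} =>
      ∑ i, ‖(inner ℂ (p.1.2.1 i) (A (p.1.2.2 i)) : ℂ)‖) := ⟨2 * s, by rintro x ⟨p, rfl⟩; exact hub p⟩
  have honuv : Orthonormal ℂ (![u, v]) := by
    rw [orthonormal_iff_ite]
    intro i j
    fin_cases i <;> fin_cases j <;>
      simp [hu, hv, huv, hvu, ← @inner_self_eq_norm_sq_to_K ℂ, inner_self_eq_norm_sq_to_K, hu, hv]
  have hAu : A u = (s:ℂ) • u := by
    rw [hAapply]
    rw [show (inner ℂ u u : ℂ) = 1 by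
      rw [@inner_self_eq_norm_sq_to_K ℂ, hu]; norm_num, hvu]
    simp
  have hAv : A v = -((s:ℂ) • v) := by
    rw [hAapply]
    rw [show (inner ℂ v v : ℂ) = 1 by
      rw [@inner_self_eq_norm_sq_to_K ℂ, hv]; norm_num, huv]
    simp
  apply le_antisymm
  · exact ciSup_le hub
  · have := le_ciSup hbdd (⟨⟨2, ![u, v], ![u, v]⟩, honuv, honuv⟩ :
      {p : Σ n : ℕ, (Fin n → E) × (Fin n → E) // Orthonormal ℂ p.2.1 ∧ Orthonormal ℂ p.2.2})
    refine le_trans (le_of_eq ?_) this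
    rw [Fin.sum_univ_two]
    simp only [Matrix.cons_val_zero, Matrix.cons_val_one, Matrix.head_cons]
    rw [hAu, hAv, inner_smul_right, inner_neg_right, inner_smul_right,
      show (inner ℂ u u : ℂ) = 1 by rw [@inner_self_eq_norm_sq_to_K ℂ, hu]; norm_num,
      show (inner ℂ v v : ℂ) = 1 by rw [@inner_self_eq_norm_sq_to_K ℂ, hv]; norm_num]
    simp [Complex.norm_real, Real.norm_eq_abs, _root_.abs_of_nonneg hs]
    ring

lemma rankOne_unit_smul {c : ℂ} (hc : ‖c‖ = 1) (g : E) : rankOne (c • g) = rankOne g := by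
  ext x
  have hcc : (starRingEnd ℂ) c * c = 1 := by
    rw [Complex.conj_mul']; push_cast; rw [hc]; norm_num
  rw [rankOne_apply, rankOne_apply, inner_smul_left, smul_smul,
    mul_comm ((starRingEnd ℂ) c) ((inner ℂ g x : ℂ)), mul_assoc, hcc, mul_one]

lemma norm_one_of_inner_self_one {u : E} (h : (inner ℂ u u : ℂ) = 1) : ‖u‖ = 1 := by
  have h3 : ‖u‖^2 = 1 := by rw [← @inner_self_eq_norm_sq ℂ, h]; simp
  nlinarith [norm_nonneg u]

lemma rankOne_diff_decomp {f g : E} (hf : ‖f‖ = 1) (hg : ‖g‖ = 1) {t : ℝ}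
    (ht0 : 0 ≤ t) (ht1 : t < 1) (htfg : (inner ℂ f g : ℂ) = (t : ℂ)) :
    ∃ u w : E, ‖u‖ = 1 ∧ ‖w‖ = 1 ∧ (inner ℂ u w : ℂ) = 0 ∧
      rankOne f - rankOne g =
        ((Real.sqrt (1 - t^2) : ℝ) : ℂ) • rankOne u - ((Real.sqrt (1 - t^2) : ℝ) : ℂ) • rankOne w := by
  have h1t : (0:ℝ) < 1 + t := by linarith
  have h1t' : (0:ℝ) < 1 - t := by linarith
  set s : ℝ := Real.sqrt (1 - t^2) with hsdef
  set p : ℝ := 1 / (2 * Real.sqrt (1 + t)) with hpdef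
  set q : ℝ := 1 / (2 * Real.sqrt (1 - t)) with hqdef
  have hsp : Real.sqrt (1+t) > 0 := Real.sqrt_pos.2 h1t
  have hsm : Real.sqrt (1-t) > 0 := Real.sqrt_pos.2 h1t'
  have hp : p^2 * (1+t) = 1/4 := by
    rw [hpdef]; rw [div_pow, mul_pow, Real.sq_sqrt h1t.le]; field_simp; ring
  have hq : q^2 * (1-t) = 1/4 := by
    rw [hqdef]; rw [div_pow, mul_pow, Real.sq_sqrt h1t'.le]; field_simp; ring
  have hsmul : s = Real.sqrt (1+t) * Real.sqrt (1-t) := by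
    rw [hsdef, ← Real.sqrt_mul h1t.le]; ring_nf
  have hpqs : 4 * (p * q * s) = 1 := by
    rw [hpdef, hqdef, hsmul]; field_simp; ring
  have hgf : (inner ℂ g f : ℂ) = (t : ℂ) := by
    rw [← inner_conj_symm, htfg, Complex.conj_ofReal]
  have hff : (inner ℂ f f : ℂ) = 1 := by
    rw [@inner_self_eq_norm_sq_to_K ℂ, hf]; norm_num
  have hgg : (inner ℂ g g : ℂ) = 1 := by
    rw [@inner_self_eq_norm_sq_to_K ℂ, hg]; norm_num
  have hcomb : ∀ a b c d : ℝ, (inner ℂ (((a:ℝ):ℂ) • f + ((b:ℝ):ℂ) • g)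
      (((c:ℝ):ℂ) • f + ((d:ℝ):ℂ) • g) : ℂ) = ((a*c + b*d + (a*d + b*c)*t : ℝ) : ℂ) := by
    intro a b c d
    simp only [inner_add_left, inner_add_right, inner_smul_left, inner_smul_right,
      hff, hgg, htfg, hgf, Complex.conj_ofReal]
    push_cast; ring
  refine ⟨((p+q:ℝ):ℂ) • f + ((p-q:ℝ):ℂ) • g, ((p-q:ℝ):ℂ) • f + ((p+q:ℝ):ℂ) • g, ?_, ?_, ?_, ?_⟩
  · apply norm_one_of_inner_self_one
    rw [hcomb]
    have : (p+q)*(p+q) + (p-q)*(p-q) + ((p+q)*(p-q) + (p-q)*(p+q))*t = 1 := by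
      linear_combination 2*hp + 2*hq
    rw [this]; norm_num
  · apply norm_one_of_inner_self_one
    rw [hcomb]
    have : (p-q)*(p-q) + (p+q)*(p+q) + ((p-q)*(p+q) + (p+q)*(p-q))*t = 1 := by
      linear_combination 2*hp + 2*hq
    rw [this]; norm_num
  · rw [hcomb]
    have : (p+q)*(p-q) + (p-q)*(p+q) + ((p+q)*(p+q) + (p-q)*(p-q))*t = 0 := by
      linear_combination 2*hp - 2*hq
    rw [this]; norm_num
  · ext x
    have hpqsC : (4:ℂ) * ((p:ℂ) * (q:ℂ) * (s:ℂ)) = 1 := by exact_mod_cast congrArg Complex.ofReal hpqs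
    simp only [ContinuousLinearMap.sub_apply, ContinuousLinearMap.smul_apply, rankOne_apply]
    rw [inner_add_left, inner_add_left, inner_smul_left, inner_smul_left, inner_smul_left,
      inner_smul_left, Complex.conj_ofReal, Complex.conj_ofReal]
    set F : ℂ := (inner ℂ f x : ℂ)
    set G : ℂ := (inner ℂ g x : ℂ)
    match_scalars
    · push_cast; linear_combination (-F) * hpqsC
    · push_cast; linear_combination G * hpqsC

lemma traceNorm_rankOne_diff {f g : E} (hf : ‖f‖ = 1) (hg : ‖g‖ = 1) :
    traceNorm (rankOne f - rankOne g) = 2 * Real.sqrt (1 - ‖(inner ℂ f g : ℂ)‖^2) := by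
  set τ : ℂ := (inner ℂ f g : ℂ) with hτ
  set t : ℝ := ‖τ‖ with ht
  have ht0 : 0 ≤ t := norm_nonneg _
  have ht1 : t ≤ 1 := by
    calc t ≤ ‖f‖ * ‖g‖ := norm_inner_le_norm f g
    _ = 1 := by rw [hf, hg]; ring
  rcases eq_or_lt_of_le ht1 with heq | hlt
  · have hf0 : f ≠ 0 := by intro h; rw [h] at hf; simp at hf
    have hg0 : g ≠ 0 := by intro h; rw [h] at hg; simp at hg
    have : ‖(inner ℂ f g : ℂ)‖ = ‖f‖ * ‖g‖ := by rw [hf, hg, ← ht, heq]; ring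
    obtain ⟨r, hr0, hrg⟩ := (norm_inner_eq_norm_iff hf0 hg0).1 this
    have hrnorm : ‖r‖ = 1 := by
      have := hg
      rw [hrg, norm_smul, hf, mul_one] at this
      exact this
    rw [hrg, rankOne_unit_smul hrnorm, sub_self, traceNorm_zero, heq]
    norm_num
  · set c : ℂ := if τ = 0 then 1 else (t:ℂ)/τ with hc
    have hcnorm : ‖c‖ = 1 := by
      rw [hc]
      split_ifs with h
      · simp
      · rw [norm_div, Complex.norm_real, Real.norm_eq_abs, _root_.abs_of_nonneg ht0, ← ht,
          div_self]
        intro hh; exact h (norm_eq_zero.1 hh)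
    have hfg' : (inner ℂ f (c • g) : ℂ) = (t : ℂ) := by
      rw [inner_smul_right, ← hτ, hc]
      split_ifs with h
      · simp [ht, h]
      · rw [div_mul_cancel₀]; exact h
    have hg' : ‖c • g‖ = 1 := by rw [norm_smul, hcnorm, hg]; ring
    obtain ⟨u, w, hu, hw, huw, hdecomp⟩ := rankOne_diff_decomp hf hg' ht0 hlt hfg'
    rw [← rankOne_unit_smul hcnorm g, hdecomp,
      spectral_traceNorm hu hw huw (Real.sqrt_nonneg _)]

end TraceNormLemmas

/-- Inf/sup exchange for the two antitone functions we need. -/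
lemma infsup_helper {ι : Type*} [Nonempty ι] (t : ι → ℝ) (h0 : ∀ i, 0 ≤ t i)
    (h1 : ∀ i, t i ≤ 1) :
    (⨅ i, 2 * Real.sqrt (1 - t i ^ 2)) = 2 * Real.sqrt (1 - ⨆ i, t i ^ 2) ∧
    (⨅ i, Real.sqrt (2 - 2 * t i)) = Real.sqrt (2 * (1 - Real.sqrt (⨆ i, t i ^ 2))) := by
  have hbdd2 : BddAbove (Set.range fun i => t i ^ 2) := by
    refine ⟨1, ?_⟩; rintro x ⟨i, rfl⟩
    simp only
    nlinarith [h0 i, h1 i]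
  have hbdd1 : BddAbove (Set.range t) := ⟨1, by rintro x ⟨i, rfl⟩; exact h1 i⟩
  have hsup_t : Real.sqrt (⨆ i, t i ^ 2) = ⨆ i, t i := by
    have hmono := Monotone.map_ciSup_of_continuousAt (f := Real.sqrt)
      (g := fun i => t i ^ 2) (Real.continuous_sqrt.continuousAt) (fun _ _ h => Real.sqrt_le_sqrt h) hbdd2
    rw [hmono]
    congr 1; funext i; exact Real.sqrt_sq (h0 i)
  constructor
  · have h2 := Antitone.map_ciSup_of_continuousAt
      (f := fun x : ℝ => 2 * Real.sqrt (1 - x)) (g := fun i => t i ^ 2)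
      ((continuous_const.mul (Real.continuous_sqrt.comp
        (continuous_const.sub continuous_id))).continuousAt)
      (fun x y hxy => by
        simp only
        have := Real.sqrt_le_sqrt (show 1 - y ≤ 1 - x by linarith)
        linarith) hbdd2
    rw [← h2]
  · have h2 := Antitone.map_ciSup_of_continuousAt
      (f := fun x : ℝ => Real.sqrt (2 - 2 * x)) (g := t)
      ((Real.continuous_sqrt.comp
        (continuous_const.sub (continuous_const.mul continuous_id))).continuousAt)
      (fun x y hxy => by
        simp only
        exact Real.sqrt_le_sqrt (by linarith)) hbdd1
    rw [← h2, ← hsup_t]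
    congr 1; ring

lemma ineq_helper {T : ℝ} (hT0 : 0 ≤ T) (hT1 : T ≤ 1) :
    (1/2) * (2 * Real.sqrt (1 - T)) ≤ Real.sqrt (2 * (1 - Real.sqrt T)) ∧
    Real.sqrt (2 * (1 - Real.sqrt T)) ≤ (1 / Real.sqrt 2) * (2 * Real.sqrt (1 - T)) := by
  set a : ℝ := Real.sqrt T with hadef
  have ha0 : 0 ≤ a := Real.sqrt_nonneg _
  have ha1 : a ≤ 1 := by
    rw [hadef, show (1:ℝ) = Real.sqrt 1 by simp]
    exact Real.sqrt_le_sqrt hT1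
  have haT : a ^ 2 = T := Real.sq_sqrt hT0
  constructor
  · have : Real.sqrt (1 - T) ≤ Real.sqrt (2 * (1 - a)) :=
      Real.sqrt_le_sqrt (by nlinarith)
    linarith
  · have hkey : Real.sqrt (2 * (1 - a)) ≤ Real.sqrt (2 * (1 - T)) :=
      Real.sqrt_le_sqrt (by nlinarith)
    have h2T : Real.sqrt (2 * (1 - T)) = Real.sqrt 2 * Real.sqrt (1 - T) :=
      Real.sqrt_mul (by norm_num) _
    have hs2 : (1 / Real.sqrt 2) * 2 = Real.sqrt 2 := by
      have h22 : Real.sqrt 2 * Real.sqrt 2 = 2 := Real.mul_self_sqrt (by norm_num)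
      have hpos : (0:ℝ) < Real.sqrt 2 := Real.sqrt_pos.2 (by norm_num)
      field_simp
      nlinarith [h22]
    calc Real.sqrt (2 * (1 - a)) ≤ Real.sqrt (2 * (1 - T)) := hkey
      _ = ((1 / Real.sqrt 2) * 2) * Real.sqrt (1 - T) := by rw [hs2, h2T]
      _ = (1 / Real.sqrt 2) * (2 * Real.sqrt (1 - T)) := by ring

instance : Nonempty {c : ℂ // ‖c‖ = 1} := ⟨⟨1, by simp⟩⟩

/-- For a pure state `ρ = |f⟩⟨f|` with `T = max |Vf|²` one has `D[ρ] = 2√(1−T)`,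
`D[f] = √(2(1−√T))`, and consequently `(1/2) D[ρ] ≤ D[f] ≤ (1/√2) D[ρ]`. -/
theorem pure_state_distance_formulas (f : HS) (hf : ‖f‖ = 1) :
    Ddist (rankOne f) =
      2 * Real.sqrt (1 - ⨆ z : ℝ × ℝ, ‖(inner ℂ (coherent z) f : ℂ)‖ ^ 2) ∧
    Dpure f =
      Real.sqrt (2 * (1 - Real.sqrt (⨆ z : ℝ × ℝ, ‖(inner ℂ (coherent z) f : ℂ)‖ ^ 2))) ∧
    (1 / 2) * Ddist (rankOne f) ≤ Dpure f ∧
    Dpure f ≤ (1 / Real.sqrt 2) * Ddist (rankOne f) := by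
  have htz0 : ∀ z : ℝ × ℝ, 0 ≤ ‖(inner ℂ (coherent z) f : ℂ)‖ := fun z => norm_nonneg _
  have htz1 : ∀ z : ℝ × ℝ, ‖(inner ℂ (coherent z) f : ℂ)‖ ≤ 1 := by
    intro z
    calc ‖(inner ℂ (coherent z) f : ℂ)‖ ≤ ‖coherent z‖ * ‖f‖ := norm_inner_le_norm _ _
    _ = 1 := by rw [norm_coherent, hf]; ring
  obtain ⟨hIS1, hIS2⟩ := infsup_helper (fun z => ‖(inner ℂ (coherent z) f : ℂ)‖) htz0 htz1
  have hbdd2 : BddAbove (Set.range fun z : ℝ × ℝ => ‖(inner ℂ (coherent z) f : ℂ)‖ ^ 2) := by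
    refine ⟨1, ?_⟩; rintro x ⟨z, rfl⟩
    simp only
    nlinarith [htz0 z, htz1 z]
  have hT0 : 0 ≤ ⨆ z : ℝ × ℝ, ‖(inner ℂ (coherent z) f : ℂ)‖ ^ 2 :=
    le_trans (by positivity) (le_ciSup hbdd2 ((0,0) : ℝ × ℝ))
  have hT1 : (⨆ z : ℝ × ℝ, ‖(inner ℂ (coherent z) f : ℂ)‖ ^ 2) ≤ 1 :=
    ciSup_le fun z => by nlinarith [htz0 z, htz1 z]
  -- Part 1
  have hpart1 : Ddist (rankOne f) =
      2 * Real.sqrt (1 - ⨆ z : ℝ × ℝ, ‖(inner ℂ (coherent z) f : ℂ)‖ ^ 2) := by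
    have h1 : ∀ z : ℝ × ℝ, traceNorm (rankOne f - rankOne (coherent z)) =
        2 * Real.sqrt (1 - ‖(inner ℂ (coherent z) f : ℂ)‖ ^ 2) := by
      intro z
      rw [traceNorm_rankOne_diff hf (norm_coherent z),
        norm_inner_symm f (coherent z)]
    rw [Ddist]
    simp_rw [h1]
    exact hIS1
  -- lower bound for every unimodular shift
  have hlow : ∀ (z : ℝ × ℝ) (c : ℂ), ‖c‖ = 1 →
      Real.sqrt (2 - 2 * ‖(inner ℂ (coherent z) f : ℂ)‖) ≤ ‖f - c • coherent z‖ := by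
    intro z c hc
    have hnormsq : ‖f - c • coherent z‖ ^ 2 =
        2 - 2 * (c * (inner ℂ f (coherent z) : ℂ)).re := by
      rw [@norm_sub_sq ℂ, inner_smul_right, hf, norm_smul, hc, norm_coherent]
      simp [RCLike.re_to_complex]
      ring
    have hre : (c * (inner ℂ f (coherent z) : ℂ)).re ≤ ‖(inner ℂ (coherent z) f : ℂ)‖ := by
      calc (c * (inner ℂ f (coherent z) : ℂ)).re ≤ ‖c * (inner ℂ f (coherent z) : ℂ)‖ :=
            Complex.re_le_norm _
        _ = ‖(inner ℂ f (coherent z) : ℂ)‖ := by rw [norm_mul, hc, one_mul]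
        _ = ‖(inner ℂ (coherent z) f : ℂ)‖ := norm_inner_symm f (coherent z)
    have hsq : 2 - 2 * ‖(inner ℂ (coherent z) f : ℂ)‖ ≤ ‖f - c • coherent z‖ ^ 2 := by
      rw [hnormsq]; linarith
    calc Real.sqrt (2 - 2 * ‖(inner ℂ (coherent z) f : ℂ)‖)
        ≤ Real.sqrt (‖f - c • coherent z‖ ^ 2) := Real.sqrt_le_sqrt hsq
      _ = ‖f - c • coherent z‖ := Real.sqrt_sq (norm_nonneg _)
  -- exact minimizer in c
  have hex : ∀ z : ℝ × ℝ, ∃ c : ℂ, ‖c‖ = 1 ∧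
      ‖f - c • coherent z‖ = Real.sqrt (2 - 2 * ‖(inner ℂ (coherent z) f : ℂ)‖) := by
    intro z
    set w : ℂ := (inner ℂ f (coherent z) : ℂ) with hw
    have hwnorm : ‖w‖ = ‖(inner ℂ (coherent z) f : ℂ)‖ := norm_inner_symm f (coherent z)
    refine ⟨if w = 0 then 1 else (‖w‖ : ℂ)/w, ?_, ?_⟩
    · split_ifs with h
      · simp
      · rw [norm_div, Complex.norm_real, Real.norm_eq_abs, _root_.abs_of_nonneg (norm_nonneg w),
          div_self]
        intro hh; exact h (norm_eq_zero.1 hh)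
    · set c : ℂ := if w = 0 then 1 else (‖w‖ : ℂ)/w with hc
      have hcnorm : ‖c‖ = 1 := by
        rw [hc]; split_ifs with h
        · simp
        · rw [norm_div, Complex.norm_real, Real.norm_eq_abs,
            _root_.abs_of_nonneg (norm_nonneg w), div_self]
          intro hh; exact h (norm_eq_zero.1 hh)
      have hcw : c * w = ((‖w‖ : ℝ) : ℂ) := by
        rw [hc]; split_ifs with h
        · simp [h]
        · rw [div_mul_cancel₀]; exact h
      have hnormsq : ‖f - c • coherent z‖ ^ 2 =
          2 - 2 * (c * w).re := by
        rw [@norm_sub_sq ℂ, inner_smul_right, hf, norm_smul, hcnorm, norm_coherent, ← hw]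
        simp [RCLike.re_to_complex]
        ring
      have hre : (c * w).re = ‖(inner ℂ (coherent z) f : ℂ)‖ := by
        rw [hcw, Complex.ofReal_re, hwnorm]
      rw [show ‖f - c • coherent z‖ = Real.sqrt (‖f - c • coherent z‖ ^ 2) from
        (Real.sqrt_sq (norm_nonneg _)).symm, hnormsq, hre]
  -- Part 2
  have hbddP : BddBelow (Set.range fun p : (ℝ × ℝ) × {c : ℂ // ‖c‖ = 1} =>
      ‖f - (p.2 : ℂ) • coherent p.1‖) := ⟨0, by rintro x ⟨p, rfl⟩; exact norm_nonneg _⟩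
  have hbddK : BddBelow (Set.range fun z : ℝ × ℝ =>
      Real.sqrt (2 - 2 * ‖(inner ℂ (coherent z) f : ℂ)‖)) :=
    ⟨0, by rintro x ⟨z, rfl⟩; exact Real.sqrt_nonneg _⟩
  have hDpure : Dpure f = ⨅ z : ℝ × ℝ, Real.sqrt (2 - 2 * ‖(inner ℂ (coherent z) f : ℂ)‖) := by
    apply le_antisymm
    · apply le_ciInf; intro z
      obtain ⟨c, hc, hcval⟩ := hex z
      calc Dpure f ≤ ‖f - c • coherent z‖ := ciInf_le hbddP (⟨z, ⟨c, hc⟩⟩)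
        _ = _ := hcval
    · apply le_ciInf; intro p
      calc (⨅ z : ℝ × ℝ, Real.sqrt (2 - 2 * ‖(inner ℂ (coherent z) f : ℂ)‖))
          ≤ Real.sqrt (2 - 2 * ‖(inner ℂ (coherent p.1) f : ℂ)‖) := ciInf_le hbddK p.1
        _ ≤ ‖f - (p.2 : ℂ) • coherent p.1‖ := hlow p.1 p.2 p.2.2
  have hpart2 : Dpure f =
      Real.sqrt (2 * (1 - Real.sqrt (⨆ z : ℝ × ℝ, ‖(inner ℂ (coherent z) f : ℂ)‖ ^ 2))) := by
    rw [hDpure]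
    exact hIS2
  obtain ⟨hi1, hi2⟩ := ineq_helper hT0 hT1
  refine ⟨hpart1, hpart2, ?_, ?_⟩
  · rw [hpart1, hpart2]; exact hi1
  · rw [hpart1, hpart2]; exact hi2
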